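/- In the setting of the previous lemma with Ỹ = V_p, Z̃ = U_p satisfying V_p^T V_p = U_p^T U_p = (1/2) I_p (so that [V_p; U_p]/normalization is column orthonormal with σ_max({V_p, U_p}) = 1), one has dist(span{Ỹ}, span{Y}) ≤ √2 · dist(span{[Ỹ; Z̃]}, span{[Y; Z]}) and dist(span{Z̃}, span{Z}) ≤ √2 · dist(span{[Ỹ; Z̃]}, span{[Y; Z]}). -/

import Mathlib

set_option maxHeartbeats 1600000

open Matrix

/-- The spectral (operator 2-)norm of a real matrix. -/
noncomputable def snorm {m n : Type*} [Fintype m] [Fintype n] [DecidableEq n]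
    (A : Matrix m n ℝ) : ℝ :=
  ‖LinearMap.toContinuousLinearMap (Matrix.toEuclideanLin A)‖

/-- The orthogonal projector onto the column space of a full column rank matrix. -/
noncomputable def projMat {m p : Type*} [Fintype m] [Fintype p] [DecidableEq m]
    [DecidableEq p] (B : Matrix m p ℝ) : Matrix m m ℝ :=
  B * (Bᵀ * B)⁻¹ * Bᵀ

open Module
open scoped Matrix.Norms.L2Operator InnerProductSpace

section abstractlayer
variable {E : Type*} [NormedAddCommGroup E] [InnerProductSpace ℝ E]

lemma sq_le_imp {a b : ℝ} (ha : 0 ≤ a) (hb : 0 ≤ b) (h : a ^ 2 ≤ b ^ 2) : a ≤ b :=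
  (abs_le_of_sq_le_sq' h hb).2

/-- Pythagoras for a symmetric idempotent. -/
lemma proj_pyth (Q : E →ₗ[ℝ] E) (hs : ∀ x y, ⟪Q x, y⟫_ℝ = ⟪x, Q y⟫_ℝ)
    (hi : ∀ x, Q (Q x) = Q x) (v : E) :
    ‖v - Q v‖ ^ 2 + ‖Q v‖ ^ 2 = ‖v‖ ^ 2 := by
  have horth : ⟪v - Q v, Q v⟫_ℝ = 0 := by
    rw [inner_sub_left, hs v (Q v), hi]
    simp [real_inner_comm]
  have h := norm_add_sq_real (v - Q v) (Q v)
  simp only [sub_add_cancel, horth, mul_zero, add_zero] at h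
  linarith

/-- projections don't increase norms of `v - Qv` -/
lemma proj_contr (Q : E →ₗ[ℝ] E) (hs : ∀ x y, ⟪Q x, y⟫_ℝ = ⟪x, Q y⟫_ℝ)
    (hi : ∀ x, Q (Q x) = Q x) (v : E) : ‖v - Q v‖ ≤ ‖v‖ := by
  have h := proj_pyth Q hs hi v
  exact sq_le_imp (norm_nonneg _) (norm_nonneg _) (by nlinarith [sq_nonneg ‖Q v‖])

lemma proj_contr' (Q : E →ₗ[ℝ] E) (hs : ∀ x y, ⟪Q x, y⟫_ℝ = ⟪x, Q y⟫_ℝ)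
    (hi : ∀ x, Q (Q x) = Q x) (v : E) : ‖Q v‖ ≤ ‖v‖ := by
  have h := proj_pyth Q hs hi v
  exact sq_le_imp (norm_nonneg _) (norm_nonneg _) (by nlinarith [sq_nonneg ‖v - Q v‖])

/-- Key combination lemma: bound on the difference of two symmetric idempotents from
one-sided bounds. -/
lemma proj_diff_le (P Q : E →ₗ[ℝ] E)
    (hPs : ∀ x y, ⟪P x, y⟫_ℝ = ⟪x, P y⟫_ℝ) (hPi : ∀ x, P (P x) = P x)
    (hQs : ∀ x y, ⟪Q x, y⟫_ℝ = ⟪x, Q y⟫_ℝ) (hQi : ∀ x, Q (Q x) = Q x)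
    {c : ℝ} (hc : 0 ≤ c)
    (hA : ∀ x, ‖P x - Q (P x)‖ ≤ c * ‖P x‖)
    (hB : ∀ x, ‖Q x - P (Q x)‖ ≤ c * ‖Q x‖)
    (u : E) : ‖P u - Q u‖ ≤ c * ‖u‖ := by
  set v := P u - Q (P u) with hv
  set t := u - P u with ht
  have hPt : P t = 0 := by simp [ht, map_sub, hPi]
  have hdec : P u - Q u = v - Q t := by simp [hv, ht, map_sub]
  have horth : ⟪v, Q t⟫_ℝ = 0 := by
    rw [← hQs]
    have : Q v = 0 := by simp [hv, map_sub, hQi]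
    simp [this]
  -- bound ‖Q t‖ ≤ c * ‖t‖
  have hQt : ‖Q t‖ ≤ c * ‖t‖ := by
    have e1 : ⟪Q t, Q t⟫_ℝ = ⟪t, Q t⟫_ℝ := by rw [hQs, hQi]
    have e2 : ⟪t, P (Q t)⟫_ℝ = 0 := by
      rw [real_inner_comm, hPs, real_inner_comm, hPt, inner_zero_left]
    have e3 : ‖Q t‖ ^ 2 = ⟪t, Q t - P (Q t)⟫_ℝ := by
      rw [inner_sub_right, e2, sub_zero, ← e1, real_inner_self_eq_norm_sq]
    have e4 : ⟪t, Q t - P (Q t)⟫_ℝ ≤ ‖t‖ * (c * ‖Q t‖) :=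
      (real_inner_le_norm _ _).trans (by
        have := hB t
        nlinarith [norm_nonneg t])
    rcases eq_or_lt_of_le (norm_nonneg (Q t)) with h0 | h0
    · rw [← h0]; positivity
    · nlinarith
  have hv' : ‖v‖ ≤ c * ‖P u‖ := hA u
  have hsq : ‖P u - Q u‖ ^ 2 ≤ (c * ‖u‖) ^ 2 := by
    have hns := norm_sub_sq_real v (Q t)
    rw [← hdec, horth] at hns
    have hpy := proj_pyth P hPs hPi u
    rw [← ht] at hpy
    have h1 : ‖v‖ ^ 2 ≤ (c * ‖P u‖) ^ 2 :=
      sq_le_sq' (by nlinarith [norm_nonneg v, norm_nonneg (P u)]) hv'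
    have h2 : ‖Q t‖ ^ 2 ≤ (c * ‖t‖) ^ 2 :=
      sq_le_sq' (by nlinarith [norm_nonneg (Q t), norm_nonneg t]) hQt
    have hpy' : c ^ 2 * (‖t‖ ^ 2 + ‖P u‖ ^ 2) = c ^ 2 * ‖u‖ ^ 2 := by rw [hpy]
    nlinarith [hpy']
  exact sq_le_imp (norm_nonneg _) (by positivity) hsq

/-- If two symmetric idempotents have ranges of the same finite dimension, a one-sided
closeness bound transfers to the other side. -/
lemma proj_sym_transfer [FiniteDimensional ℝ E] (P Q : E →ₗ[ℝ] E)
    (hPs : ∀ x y, ⟪P x, y⟫_ℝ = ⟪x, P y⟫_ℝ) (hPi : ∀ x, P (P x) = P x)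
    (hQs : ∀ x y, ⟪Q x, y⟫_ℝ = ⟪x, Q y⟫_ℝ) (hQi : ∀ x, Q (Q x) = Q x)
    (hrank : finrank ℝ (LinearMap.range P) = finrank ℝ (LinearMap.range Q))
    {c : ℝ} (hc : 0 ≤ c) (hc1 : c < 1)
    (hA : ∀ x, ‖P x - Q (P x)‖ ≤ c * ‖P x‖) :
    ∀ y, ‖Q y - P (Q y)‖ ≤ c * ‖Q y‖ := by
  set s : ℝ := Real.sqrt (1 - c ^ 2) with hs
  have hs0 : 0 < s := Real.sqrt_pos.2 (by nlinarith)
  have hssq : s ^ 2 = 1 - c ^ 2 := Real.sq_sqrt (by nlinarith)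
  -- the restricted map f : range P → range Q
  set U := LinearMap.range P with hU
  set V := LinearMap.range Q with hV
  have hmem : ∀ x : U, Q (x : E) ∈ V := fun x => LinearMap.mem_range_self _ _
  set f : U →ₗ[ℝ] V := (Q.comp U.subtype).codRestrict V (fun x => hmem x) with hf
  -- P and Q fix their ranges
  have hPfix : ∀ x : E, x ∈ U → P x = x := by
    rintro x ⟨w, rfl⟩; exact hPi w
  have hQfix : ∀ x : E, x ∈ V → Q x = x := by
    rintro x ⟨w, rfl⟩; exact hQi w
  -- lower bound for f
  have hflow : ∀ x : U, s * ‖(x : E)‖ ≤ ‖Q (x : E)‖ := by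
    intro x
    have h1 : ‖(x : E) - Q (x : E)‖ ≤ c * ‖(x : E)‖ := by
      have := hA (x : E)
      rwa [hPfix _ x.2] at this
    have h2 := proj_pyth Q hQs hQi (x : E)
    have : (s * ‖(x : E)‖) ^ 2 ≤ ‖Q (x : E)‖ ^ 2 := by
      have h3 : ‖(x:E) - Q (x:E)‖ ^ 2 ≤ (c * ‖(x:E)‖) ^ 2 :=
        sq_le_sq' (by nlinarith [norm_nonneg ((x:E) - Q (x:E)), norm_nonneg (x:E)]) h1
      nlinarith [norm_nonneg (x : E)]
    exact sq_le_imp (by positivity) (norm_nonneg _) this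
  have hfinj : Function.Injective f := by
    rw [injective_iff_map_eq_zero]
    intro x hx
    have hx0 : Q (x : E) = 0 := congrArg Subtype.val hx
    have := hflow x
    rw [hx0, norm_zero] at this
    have : ‖(x : E)‖ = 0 := le_antisymm (by nlinarith [norm_nonneg (x:E)]) (norm_nonneg _)
    exact Subtype.ext (norm_eq_zero.mp this)
  have hfsurj : Function.Surjective f := by
    have h1 : finrank ℝ (LinearMap.range f) = finrank ℝ V := by
      rw [LinearMap.finrank_range_of_inj hfinj, ← hrank]
    rw [← LinearMap.range_eq_top]
    exact Submodule.eq_top_of_finrank_eq h1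
  intro y
  rcases eq_or_ne (Q y) 0 with h0 | h0
  · simp [h0]
  -- write Q y = Q x for x ∈ U
  have hQyV : Q y ∈ V := LinearMap.mem_range_self _ _
  obtain ⟨x, hx⟩ := hfsurj ⟨Q y, hQyV⟩
  have hx' : Q (x : E) = Q y := congrArg Subtype.val hx
  set z : E := Q y with hz
  have hzpos : 0 < ‖z‖ := norm_pos_iff.2 h0
  -- ⟪P z, x⟫ = ‖z‖ ^ 2
  have e0 : ⟪(x : E), Q (x : E)⟫_ℝ = ‖Q (x : E)‖ ^ 2 := by
    rw [← real_inner_self_eq_norm_sq, hQs, hQi]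
  have hinner : ⟪P z, (x : E)⟫_ℝ = ‖z‖ ^ 2 := by
    rw [hPs, hPfix _ x.2, real_inner_comm, ← hx', e0, hx']
  have hxn : s * ‖(x : E)‖ ≤ ‖z‖ := by rw [← hx']; exact hflow x
  -- lower bound ‖P z‖
  have hPz : s * ‖z‖ ≤ ‖P z‖ := by
    have h1 : ‖z‖ ^ 2 ≤ ‖P z‖ * ‖(x : E)‖ := by
      rw [← hinner]; exact real_inner_le_norm _ _
    nlinarith [mul_le_mul_of_nonneg_left h1 hs0.le,
      mul_le_mul_of_nonneg_left hxn (norm_nonneg (P z)), hzpos]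
  -- conclude
  have hpy := proj_pyth P hPs hPi z
  have hsq : ‖z - P z‖ ^ 2 ≤ (c * ‖z‖) ^ 2 := by
    have h4 : (s * ‖z‖) ^ 2 ≤ ‖P z‖ ^ 2 :=
      sq_le_sq' (by nlinarith [norm_nonneg (P z), norm_nonneg z]) hPz
    nlinarith [hssq]
  exact sq_le_imp (norm_nonneg _) (by positivity) hsq

end abstractlayer

section matrixhelpers
variable {a b c : Type*} [Fintype a] [Fintype b] [Fintype c]

section helpers
variable [DecidableEq a] [DecidableEq b] [DecidableEq c]

lemma euclid_mul (A : Matrix a b ℝ) (B : Matrix b c ℝ) (x : EuclideanSpace ℝ c) :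
    toEuclideanLin (A * B) x = toEuclideanLin A (toEuclideanLin B x) := by
  simp [Matrix.toEuclideanLin_apply, Matrix.mulVec_mulVec]

lemma euclid_one (x : EuclideanSpace ℝ a) : toEuclideanLin (1 : Matrix a a ℝ) x = x := by
  simp [Matrix.toEuclideanLin_apply]

lemma euclid_inner (A : Matrix a b ℝ) (x : EuclideanSpace ℝ b) (y : EuclideanSpace ℝ a) :
    ⟪toEuclideanLin A x, y⟫_ℝ = ⟪x, toEuclideanLin Aᵀ y⟫_ℝ := by
  simp only [PiLp.inner_apply, RCLike.inner_apply, conj_trivial,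
    Matrix.toEuclideanLin_apply, PiLp.toLp_apply,
    Matrix.mulVec, dotProduct, Matrix.transpose_apply, Finset.sum_mul, Finset.mul_sum]
  rw [Finset.sum_comm]
  apply Finset.sum_congr rfl; intros; apply Finset.sum_congr rfl; intros; ring

lemma matrix_norm_le {A : Matrix a b ℝ} {c' : ℝ} (hc : 0 ≤ c')
    (h : ∀ x : EuclideanSpace ℝ b, ‖toEuclideanLin A x‖ ≤ c' * ‖x‖) : ‖A‖ ≤ c' := by
  rw [Matrix.l2_opNorm_def]
  exact ContinuousLinearMap.opNorm_le_bound _ hc h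

lemma matrix_apply_le (A : Matrix a b ℝ) (x : EuclideanSpace ℝ b) :
    ‖toEuclideanLin A x‖ ≤ ‖A‖ * ‖x‖ :=
  (LinearMap.toContinuousLinearMap (Matrix.toEuclideanLin A)).le_opNorm x

lemma matrix_norm_one_le : ‖(1 : Matrix a a ℝ)‖ ≤ 1 :=
  matrix_norm_le zero_le_one fun x => by rw [euclid_one, one_mul]

lemma matrix_norm_transpose (A : Matrix a b ℝ) : ‖Aᵀ‖ = ‖A‖ := by
  rw [← Matrix.conjTranspose_eq_transpose_of_trivial, Matrix.l2_opNorm_conjTranspose]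

lemma norm_le_one_of_orth {A : Matrix a b ℝ} (h : Aᵀ * A = 1) : ‖A‖ ≤ 1 := by
  have h1 : ‖A‖ * ‖A‖ = ‖Aᵀ * A‖ := by
    rw [← Matrix.conjTranspose_eq_transpose_of_trivial, Matrix.l2_opNorm_conjTranspose_mul_self]
  rw [h] at h1
  nlinarith [norm_nonneg A, matrix_norm_one_le (a := b)]

lemma norm_sq_le_of_scaled {A : Matrix a b ℝ} {t : ℝ} (ht : 0 ≤ t)
    (h : Aᵀ * A = t • 1) : ‖A‖ ^ 2 ≤ t := by
  have h1 : ‖A‖ * ‖A‖ = ‖Aᵀ * A‖ := by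
    rw [← Matrix.conjTranspose_eq_transpose_of_trivial, Matrix.l2_opNorm_conjTranspose_mul_self]
  rw [h, norm_smul] at h1
  have h2 : ‖t‖ * ‖(1 : Matrix b b ℝ)‖ ≤ t := by
    rw [Real.norm_of_nonneg ht]
    nlinarith [matrix_norm_one_le (a := b), norm_nonneg (1 : Matrix b b ℝ)]
  nlinarith

lemma proj_matrix_norm_le_one {R : Matrix a a ℝ} (hs : Rᵀ = R) (hi : R * R = R) :
    ‖R‖ ≤ 1 := by
  have h1 : ‖R‖ * ‖R‖ = ‖Rᵀ * R‖ := by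
    rw [← Matrix.conjTranspose_eq_transpose_of_trivial, Matrix.l2_opNorm_conjTranspose_mul_self]
  rw [hs, hi] at h1
  nlinarith [norm_nonneg R]

lemma finrank_range_toEuclideanLin (A : Matrix a b ℝ) :
    finrank ℝ (LinearMap.range (toEuclideanLin A)) = A.rank := by
  have h : LinearMap.range (toEuclideanLin A) =
      Submodule.map ((WithLp.linearEquiv 2 ℝ (a → ℝ)).symm : (a → ℝ) →ₗ[ℝ] EuclideanSpace ℝ a) (LinearMap.range A.mulVecLin) := by
    ext x
    simp only [LinearMap.mem_range, Submodule.mem_map]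
    constructor
    · rintro ⟨v, rfl⟩
      exact ⟨A *ᵥ (WithLp.equiv 2 (b → ℝ)) v, ⟨_, rfl⟩, rfl⟩
    · rintro ⟨w, ⟨v, rfl⟩, rfl⟩
      exact ⟨(WithLp.equiv 2 (b → ℝ)).symm v, by
        simp [Matrix.toEuclideanLin_apply, Matrix.mulVecLin]⟩
  rw [h, show Matrix.rank A = finrank ℝ (LinearMap.range A.mulVecLin) from rfl]
  exact LinearEquiv.finrank_map_eq _ _

lemma isUnit_det_gram (Y : Matrix a b ℝ) (h : Y.rank = Fintype.card b) :
    IsUnit (Yᵀ * Y).det := by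
  have h1 : (Yᵀ * Y).rank = Fintype.card b := by
    rw [Matrix.rank_transpose_mul_self, h]
  rw [← Matrix.isUnit_iff_isUnit_det, ← Matrix.mulVec_injective_iff_isUnit]
  have h2 : finrank ℝ (LinearMap.ker (Yᵀ * Y).mulVecLin) = 0 := by
    have h3 := (Yᵀ * Y).mulVecLin.finrank_range_add_finrank_ker
    rw [show LinearMap.range (Yᵀ * Y).mulVecLin = _ from rfl] at h3
    have : finrank ℝ (LinearMap.range (Yᵀ * Y).mulVecLin) = Fintype.card b := h1
    rw [this, finrank_pi] at h3
    omega
  have h4 : LinearMap.ker (Yᵀ * Y).mulVecLin = ⊥ :=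
    Submodule.finrank_eq_zero.mp h2
  intro x y hxy
  have hker : x - y ∈ LinearMap.ker (Yᵀ * Y).mulVecLin := by
    rw [LinearMap.mem_ker, map_sub]
    rw [Matrix.mulVecLin_apply, Matrix.mulVecLin_apply, hxy, sub_self]
  rw [h4, Submodule.mem_bot] at hker
  exact sub_eq_zero.mp hker

end helpers
end matrixhelpers

section side
variable {ι κ π : Type*} [Fintype ι] [Fintype κ] [Fintype π]
  [DecidableEq ι] [DecidableEq κ] [DecidableEq π]


lemma side_bound
    (Wt W : Matrix ι π ℝ) (E : Matrix κ ι ℝ) (Xt X : Matrix κ π ℝ)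
    (hWt : Wtᵀ * Wt = 1) (hW : Wᵀ * W = 1) (hE : E * Eᵀ = 1)
    (hXtE : Xt = E * Wt) (hXE : X = E * W)
    (hXtn : Xtᵀ * Xt = (1/2 : ℝ) • 1)
    (hXrank : X.rank = Fintype.card π) :
    ‖projMat Xt - projMat X‖ ≤ Real.sqrt 2 * ‖projMat Wt - projMat W‖ := by
  -- basic projector identities
  have hPWt : projMat Wt = Wt * Wtᵀ := by
    rw [projMat, hWt, inv_one, Matrix.mul_one]
  have hPW : projMat W = W * Wᵀ := by
    rw [projMat, hW, inv_one, Matrix.mul_one]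
  have hinv : (Xtᵀ * Xt)⁻¹ = (2 : ℝ) • (1 : Matrix π π ℝ) := by
    apply Matrix.inv_eq_right_inv
    rw [hXtn, Matrix.smul_mul, Matrix.mul_smul, smul_smul, Matrix.mul_one]
    norm_num
  have hP : projMat Xt = (2 : ℝ) • (Xt * Xtᵀ) := by
    rw [projMat, hinv, Matrix.mul_smul, Matrix.smul_mul, Matrix.mul_one]
  have hGdet : IsUnit (Xᵀ * X).det := isUnit_det_gram X hXrank
  have hQ' : projMat X = X * ((Xᵀ * X)⁻¹ * Xᵀ) := by rw [projMat, Matrix.mul_assoc]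
  have hQX : projMat X * X = X := by
    rw [projMat, Matrix.mul_assoc, Matrix.mul_assoc,
      Matrix.nonsing_inv_mul _ hGdet, Matrix.mul_one]
  have hQt : (projMat X)ᵀ = projMat X := by
    rw [projMat, Matrix.transpose_mul, Matrix.transpose_mul,
      Matrix.transpose_nonsing_inv, Matrix.transpose_mul, Matrix.transpose_transpose,
      Matrix.mul_assoc]
  have hQi : projMat X * projMat X = projMat X := by
    nth_rewrite 2 [hQ']
    rw [← Matrix.mul_assoc, hQX, ← hQ']
  have hPt : (projMat Xt)ᵀ = projMat Xt := by
    rw [hP, Matrix.transpose_smul, Matrix.transpose_mul, Matrix.transpose_transpose]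
  have hPi : projMat Xt * projMat Xt = projMat Xt := by
    rw [hP, Matrix.smul_mul, Matrix.mul_smul, smul_smul,
      Matrix.mul_assoc, ← Matrix.mul_assoc Xtᵀ, hXtn, Matrix.smul_mul, Matrix.one_mul,
      Matrix.mul_smul, smul_smul]
    norm_num
  have hPXt : projMat Xt * Xt = Xt := by
    rw [hP, Matrix.smul_mul, Matrix.mul_assoc, hXtn, Matrix.mul_smul, smul_smul]
    norm_num
  -- key factorization
  have hQX0 : (1 - projMat X) * X = 0 := by
    rw [Matrix.sub_mul, Matrix.one_mul, hQX, sub_self]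
  have hfact : E * ((Wt * Wtᵀ - W * Wᵀ) * Wt) = Xt - X * (Wᵀ * Wt) := by
    rw [hXtE, hXE, Matrix.sub_mul, Matrix.mul_sub]
    simp only [Matrix.mul_assoc]
    rw [hWt, Matrix.mul_one]
  have h2 : (1 - projMat X) * (E * ((Wt * Wtᵀ - W * Wᵀ) * Wt))
      = (1 - projMat X) * Xt := by
    rw [hfact, Matrix.mul_sub (1 - projMat X) Xt (X * (Wᵀ * Wt)),
      ← Matrix.mul_assoc (1 - projMat X) X (Wᵀ * Wt), hQX0, Matrix.zero_mul, sub_zero]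
  have hkey : (1 - projMat X) * projMat Xt
      = ((1 - projMat X) * E * (projMat Wt - projMat W) * Wt) * ((2:ℝ) • Xtᵀ) := by
    rw [hPWt, hPW]
    have h4 : (1 - projMat X) * projMat Xt
        = ((1 - projMat X) * Xt) * ((2:ℝ) • Xtᵀ) := by
      rw [hP]
      simp only [Matrix.mul_smul, Matrix.smul_mul, Matrix.mul_assoc]
    rw [h4, Matrix.mul_assoc (1 - projMat X) E (Wt * Wtᵀ - W * Wᵀ),
      Matrix.mul_assoc (1 - projMat X) (E * (Wt * Wtᵀ - W * Wᵀ)) Wt,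
      Matrix.mul_assoc E (Wt * Wtᵀ - W * Wᵀ) Wt, h2]
  -- norm bounds on the factors
  have hd0 : (0:ℝ) ≤ ‖projMat Wt - projMat W‖ := norm_nonneg _
  have hnQ : ‖(1 - projMat X : Matrix κ κ ℝ)‖ ≤ 1 := by
    apply proj_matrix_norm_le_one
    · rw [Matrix.transpose_sub, Matrix.transpose_one, hQt]
    · simp only [Matrix.mul_sub, Matrix.sub_mul, Matrix.mul_one, Matrix.one_mul, hQi]
      abel
  have hnE : ‖E‖ ≤ 1 := by
    have h5 : ‖Eᵀ‖ ≤ 1 := by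
      apply norm_le_one_of_orth
      rw [Matrix.transpose_transpose, hE]
    rw [← matrix_norm_transpose]; exact h5
  have hnWt : ‖Wt‖ ≤ 1 := norm_le_one_of_orth hWt
  have hnXt2 : ‖(2:ℝ) • Xtᵀ‖ ≤ Real.sqrt 2 := by
    have h6 : ‖Xt‖^2 ≤ 1/2 := norm_sq_le_of_scaled (by norm_num) hXtn
    have h7 : (Real.sqrt 2)^2 = 2 := Real.sq_sqrt (by norm_num)
    rw [norm_smul, matrix_norm_transpose, Real.norm_ofNat]
    exact sq_le_imp (by positivity) (Real.sqrt_nonneg _) (by nlinarith [norm_nonneg Xt])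
  -- the one-sided matrix-norm bound
  have hone : ‖(1 - projMat X) * projMat Xt‖
      ≤ Real.sqrt 2 * ‖projMat Wt - projMat W‖ := by
    rw [hkey]
    calc ‖(1 - projMat X) * E * (projMat Wt - projMat W) * Wt * ((2:ℝ) • Xtᵀ)‖
        ≤ ‖(1 - projMat X) * E * (projMat Wt - projMat W) * Wt‖ * ‖(2:ℝ) • Xtᵀ‖ :=
          Matrix.l2_opNorm_mul _ _
      _ ≤ (‖(1 - projMat X) * E * (projMat Wt - projMat W)‖ * ‖Wt‖) * ‖(2:ℝ) • Xtᵀ‖ := by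
          apply mul_le_mul_of_nonneg_right (Matrix.l2_opNorm_mul _ _) (norm_nonneg _)
      _ ≤ ((‖(1 - projMat X) * E‖ * ‖projMat Wt - projMat W‖) * ‖Wt‖) * ‖(2:ℝ) • Xtᵀ‖ := by
          apply mul_le_mul_of_nonneg_right
            (mul_le_mul_of_nonneg_right (Matrix.l2_opNorm_mul _ _) (norm_nonneg _))
            (norm_nonneg _)
      _ ≤ (((1:ℝ) * ‖projMat Wt - projMat W‖) * 1) * Real.sqrt 2 := by
          have hE1 : ‖(1 - projMat X) * E‖ ≤ 1 := (Matrix.l2_opNorm_mul _ _).trans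
            (by nlinarith [norm_nonneg (1 - projMat X : Matrix κ κ ℝ), norm_nonneg E])
          gcongr
      _ = Real.sqrt 2 * ‖projMat Wt - projMat W‖ := by ring
  -- translate to Euclidean linear maps
  set LP := toEuclideanLin (projMat Xt) with hLP
  set LQ := toEuclideanLin (projMat X) with hLQ
  have hLPs : ∀ x y, ⟪LP x, y⟫_ℝ = ⟪x, LP y⟫_ℝ := fun x y => by
    rw [hLP, euclid_inner]; rw [hPt]
  have hLQs : ∀ x y, ⟪LQ x, y⟫_ℝ = ⟪x, LQ y⟫_ℝ := fun x y => by
    rw [hLQ, euclid_inner]; rw [hQt]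
  have hLPi : ∀ x, LP (LP x) = LP x := fun x => by
    rw [hLP, ← euclid_mul, hPi]
  have hLQi : ∀ x, LQ (LQ x) = LQ x := fun x => by
    rw [hLQ, ← euclid_mul, hQi]
  have hc0 : (0:ℝ) ≤ Real.sqrt 2 * ‖projMat Wt - projMat W‖ :=
    mul_nonneg (Real.sqrt_nonneg _) hd0
  -- pointwise one-sided bound
  have hAp : ∀ x, ‖LP x - LQ (LP x)‖ ≤ (Real.sqrt 2 * ‖projMat Wt - projMat W‖) * ‖LP x‖ := by
    intro x
    have h8 : toEuclideanLin ((1 - projMat X) * projMat Xt) (LP x) = LP x - LQ (LP x) := by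
      rw [euclid_mul, ← hLP, hLPi x, map_sub, LinearMap.sub_apply, euclid_one, ← hLQ]
    calc ‖LP x - LQ (LP x)‖
        = ‖toEuclideanLin ((1 - projMat X) * projMat Xt) (LP x)‖ := by rw [h8]
      _ ≤ ‖(1 - projMat X) * projMat Xt‖ * ‖LP x‖ := matrix_apply_le _ _
      _ ≤ (Real.sqrt 2 * ‖projMat Wt - projMat W‖) * ‖LP x‖ :=
          mul_le_mul_of_nonneg_right hone (norm_nonneg _)
  -- ranks
  have hhalf : IsUnit ((1/2:ℝ) • (1 : Matrix π π ℝ)) := by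
    rw [Matrix.isUnit_iff_isUnit_det, Matrix.det_smul, Matrix.det_one, mul_one]
    exact isUnit_iff_ne_zero.2 (pow_ne_zero _ (by norm_num))
  have h9 : ((1/2:ℝ) • (1 : Matrix π π ℝ)).rank = Fintype.card π :=
    Matrix.rank_of_isUnit _ hhalf
  have hXtrank : Xt.rank = Fintype.card π := le_antisymm (Matrix.rank_le_card_width Xt)
    (by rw [← h9, ← hXtn]; exact Matrix.rank_mul_le_right Xtᵀ Xt)
  have hP'' : projMat Xt = Xt * ((2:ℝ) • Xtᵀ) := by rw [hP, Matrix.mul_smul]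
  have hrankP : (projMat Xt).rank = Fintype.card π := le_antisymm
    (by rw [hP'', ← hXtrank] at *; exact Matrix.rank_mul_le_left Xt _)
    (by rw [← hXtrank]; nth_rewrite 1 [← hPXt]; exact Matrix.rank_mul_le_left _ Xt)
  have hrankQ : (projMat X).rank = Fintype.card π := le_antisymm
    (by rw [hQ', ← hXrank]; exact Matrix.rank_mul_le_left X _)
    (by rw [← hXrank]; nth_rewrite 1 [← hQX]; exact Matrix.rank_mul_le_left _ X)
  have hrank : finrank ℝ (LinearMap.range LP) = finrank ℝ (LinearMap.range LQ) := by
    rw [hLP, hLQ, finrank_range_toEuclideanLin, finrank_range_toEuclideanLin, hrankP, hrankQ]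
  -- combine
  have hsub : ∀ x, toEuclideanLin (projMat Xt - projMat X) x = LP x - LQ x := by
    intro x
    rw [map_sub, LinearMap.sub_apply, ← hLP, ← hLQ]
  by_cases hc1 : Real.sqrt 2 * ‖projMat Wt - projMat W‖ < 1
  · have hBp := proj_sym_transfer LP LQ hLPs hLPi hLQs hLQi hrank hc0 hc1 hAp
    have hpt := proj_diff_le LP LQ hLPs hLPi hLQs hLQi hc0 hAp hBp
    apply matrix_norm_le hc0
    intro x
    rw [hsub x]
    exact hpt x
  · push_neg at hc1
    have hcA : ∀ x, ‖LP x - LQ (LP x)‖ ≤ 1 * ‖LP x‖ := fun x => by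
      rw [one_mul]; exact proj_contr LQ hLQs hLQi (LP x)
    have hcB : ∀ x, ‖LQ x - LP (LQ x)‖ ≤ 1 * ‖LQ x‖ := fun x => by
      rw [one_mul]; exact proj_contr LP hLPs hLPi (LQ x)
    have hpt := proj_diff_le LP LQ hLPs hLPi hLQs hLQi zero_le_one hcA hcB
    apply matrix_norm_le hc0
    intro x
    rw [hsub x]
    exact (hpt x).trans (by nlinarith [norm_nonneg x])
end side



lemma snorm_eq {m n : Type*} [Fintype m] [Fintype n] [DecidableEq n]
    (A : Matrix m n ℝ) : snorm A = ‖A‖ := rfl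

/-- in the special case `Ỹᵀ Ỹ = Z̃ᵀ Z̃ = (1/2) I_p` (so the largest
generalized singular value of both pairs equals 1), both the upper and lower
subspace distances are bounded by `√2` times the stacked subspace distance. -/
theorem block_distance_bound_sqrt_two
    (m n p : ℕ) (hp : 0 < p) (hpn : p < n) (hpm : p < m)
    (Yt Y : Matrix (Fin n) (Fin p) ℝ) (Zt Z : Matrix (Fin m) (Fin p) ℝ)
    (hYt : Ytᵀ * Yt = (1 / 2 : ℝ) • 1) (hZt : Ztᵀ * Zt = (1 / 2 : ℝ) • 1)
    (hY : Y.rank = p) (hZ : Z.rank = p)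
    (horth2 : (Matrix.fromRows Y Z)ᵀ * Matrix.fromRows Y Z = 1) :
    snorm (projMat Yt - projMat Y) ≤
      Real.sqrt 2 * snorm (projMat (Matrix.fromRows Yt Zt) - projMat (Matrix.fromRows Y Z)) ∧
    snorm (projMat Zt - projMat Z) ≤
      Real.sqrt 2 * snorm (projMat (Matrix.fromRows Yt Zt) - projMat (Matrix.fromRows Y Z)) := by
  have hWt : (Matrix.fromRows Yt Zt)ᵀ * Matrix.fromRows Yt Zt = 1 := by
    rw [Matrix.transpose_fromRows, Matrix.fromCols_mul_fromRows, hYt, hZt, ← add_smul]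
    norm_num
  constructor
  · rw [snorm_eq, snorm_eq]
    refine side_bound (Matrix.fromRows Yt Zt) (Matrix.fromRows Y Z)
      (Matrix.fromCols (1 : Matrix (Fin n) (Fin n) ℝ) (0 : Matrix (Fin n) (Fin m) ℝ))
      Yt Y hWt horth2 ?_ ?_ ?_ hYt (by rw [hY, Fintype.card_fin])
    · rw [Matrix.transpose_fromCols, Matrix.fromCols_mul_fromRows]
      simp
    · rw [Matrix.fromCols_mul_fromRows, Matrix.one_mul, Matrix.zero_mul, add_zero]
    · rw [Matrix.fromCols_mul_fromRows, Matrix.one_mul, Matrix.zero_mul, add_zero]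
  · rw [snorm_eq, snorm_eq]
    refine side_bound (Matrix.fromRows Yt Zt) (Matrix.fromRows Y Z)
      (Matrix.fromCols (0 : Matrix (Fin m) (Fin n) ℝ) (1 : Matrix (Fin m) (Fin m) ℝ))
      Zt Z hWt horth2 ?_ ?_ ?_ hZt (by rw [hZ, Fintype.card_fin])
    · rw [Matrix.transpose_fromCols, Matrix.fromCols_mul_fromRows]
      simp
    · rw [Matrix.fromCols_mul_fromRows, Matrix.zero_mul, Matrix.one_mul, zero_add]
    · rw [Matrix.fromCols_mul_fromRows, Matrix.zero_mul, Matrix.one_mul, zero_add]
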